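/- The maps λ and τ are mutually inverse bijections between the set of Łukasiewicz paths and the set of plane trees: for every plane tree T, τ(λ(T)) = T, and for every Łukasiewicz path P, λ(τ(P)) = P. -/

import Mathlib

/-! ## Plane trees -/

/-- A plane tree: a root together with an ordered (left-to-right) list of subtrees.
A node is a *leaf* if it has no children, and *internal* otherwise. -/
inductive PTree : Type where
  | node : List PTree → PTree


namespace Luka

/-! ## Łukasiewicz paths

A path is encoded by its list of step increments: the step `(1,k)` (an up-step `U_k` of
degree `k`) is encoded by `k : ℤ` with `k ≥ 0`, and the down step `D = (1,-1)` by `-1`. -/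

/-- `P` is a Łukasiewicz path: it is nonempty, uses steps `(1,k)` with `k ≥ -1`,
stays (weakly) above the `x`-axis before its last step, and ends at height `-1`
(so that it goes strictly below the axis only at the last step, which is forced
to be the down-step `D`). -/
def IsLukas (P : List ℤ) : Prop :=
  P ≠ [] ∧ (∀ s ∈ P, -1 ≤ s) ∧ (∀ n, n < P.length → 0 ≤ (P.take n).sum) ∧ P.sum = -1

/-- The degrees of the up-steps of `P`, from left to right (the *profile* of `P`). -/
def upDegs (P : List ℤ) : List ℕ := (P.filter (fun s => 0 ≤ s)).map Int.toNat

/-- The profile multiset `𝔐(P)`: the multiset of degrees of the up-steps of `P`. -/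
def profileM (P : List ℤ) : Multiset ℕ := (upDegs P : Multiset ℕ)

/-- The degree of the first up-step of `P`, if any. -/
def firstUp? (P : List ℤ) : Option ℕ := (upDegs P).head?

/-- The degree of the last up-step of `P`, if any. -/
def lastUp? (P : List ℤ) : Option ℕ := (upDegs P).getLast?

/-- Auxiliary: starting from height `h`, record the starting height of every up-step. -/
def areaVecAux : ℤ → List ℤ → List ℤ
  | _, [] => []
  | h, s :: rest => (if 0 ≤ s then [h] else []) ++ areaVecAux (h + s) rest

/-- The area vector `Area(P)`: the `i`-th entry is the `y`-coordinate of the starting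
point of the `i`-th up-step of `P`. -/
def areaVec (P : List ℤ) : List ℤ := areaVecAux 0 P

/-- `area(P)`: the sum of the entries of the area vector (entries of a Łukasiewicz
path are nonnegative, so taking `Int.toNat` entrywise is harmless). -/
def area (P : List ℤ) : ℕ := ((areaVec P).map Int.toNat).sum

/-- Auxiliary computation of the depth values: `cur` is the depth value of the previous
step (`0` initially), and `stack` holds the pending depth values of the future matching
down-steps (top of the stack = value for the next matching down-step to come).
Reading an up-step `U_k` whose value is `cur` (inherited from the previous step) pushes
the values `cur+1, …, cur+k` for its `k` matching down-steps (its first matching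
down-step, which crosses its topmost interior level, gets `cur+1`, etc.); reading a
down-step pops its value.  The list returned records the value `d_i` of each up-step,
from left to right. -/
def depthVecAux : ℕ → List ℕ → List ℤ → List ℕ
  | _, _, [] => []
  | cur, stack, s :: rest =>
    if 0 ≤ s then
      cur :: depthVecAux cur ((List.range s.toNat).map (fun i => cur + i + 1) ++ stack) rest
    else
      match stack with
      | [] => depthVecAux cur [] rest
      | v :: st => depthVecAux v st rest

/-- The depth vector `Depth(P)`: the values `d_i` at the up-steps of `P`, left to right. -/
def depthVec (P : List ℤ) : List ℕ := depthVecAux 0 [] P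

/-- `depth(P)`: the sum of the entries of the depth vector. -/
def depth (P : List ℤ) : ℕ := (depthVec P).sum

/-- `P ∈ 𝓛_M`. -/
def MemL (M : Multiset ℕ) (P : List ℤ) : Prop := IsLukas P ∧ profileM P = M

/-- `P ∈ 𝓛_{a,M}`: first up-step of degree `a`, profile multiset `M ⊎ {a}`. -/
def MemLa (a : ℕ) (M : Multiset ℕ) (P : List ℤ) : Prop :=
  IsLukas P ∧ firstUp? P = some a ∧ profileM P = a ::ₘ M

/-- `P ∈ 𝓛_{M,b}`: last up-step of degree `b`, profile multiset `M ⊎ {b}`. -/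
def MemLb (M : Multiset ℕ) (b : ℕ) (P : List ℤ) : Prop :=
  IsLukas P ∧ lastUp? P = some b ∧ profileM P = b ::ₘ M

/-- `P ∈ 𝓛_{a,M,b}`: first up-step of degree `a`, last up-step of degree `b`,
profile multiset `M ⊎ {a, b}`. -/
def MemLab (a : ℕ) (M : Multiset ℕ) (b : ℕ) (P : List ℤ) : Prop :=
  IsLukas P ∧ firstUp? P = some a ∧ lastUp? P = some b ∧ profileM P = a ::ₘ b ::ₘ M

/-! ## Plane-tree statistics -/

/-- The (ordered) children of the root of a plane tree. -/
def children : PTree → List PTree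
  | .node ts => ts

/-- The degree of (the root of) a plane tree: its number of children. -/
def numChildren (t : PTree) : ℕ := (children t).length

mutual
/-- Number of internal nodes of a plane tree. -/
def internCount : PTree → ℕ
  | .node [] => 0
  | .node (t :: ts) => 1 + internCountL (t :: ts)
def internCountL : List PTree → ℕ
  | [] => 0
  | t :: ts => internCount t + internCountL ts
end

mutual
/-- `lthornT T` = the sum of `lthorn(u)` over all internal nodes `u` of `T`, where
`lthorn(u)` is the number of descending edges of strict ancestors `v` of `u` lying to
the left of the path from `v` to `u`.  (Every internal node of the subtree rooted at
the `i`-th child (0-indexed) of a node gains `i` left thorns from that node.) -/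
def lthornT : PTree → ℕ
  | .node ts => lthornL 0 ts
def lthornL : ℕ → List PTree → ℕ
  | _, [] => 0
  | i, t :: ts => lthornT t + i * internCount t + lthornL (i + 1) ts
end

mutual
/-- `rthornT T` = the sum of `rthorn(u)` over all internal nodes `u` of `T`, where
`rthorn(u)` is the number of descending edges of strict ancestors `v` of `u` lying to
the right of the path from `v` to `u`. -/
def rthornT : PTree → ℕ
  | .node ts => rthornL ts
def rthornL : List PTree → ℕ
  | [] => 0
  | t :: ts => rthornT t + ts.length * internCount t + rthornL ts
end

mutual
/-- The list of the values `lthorn(u)` for the internal nodes `u` of `T`, in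
contour-walk (preorder) order. -/
def lthornList : PTree → List ℕ
  | .node [] => []
  | .node (t :: ts) => 0 :: lthornLL 0 (t :: ts)
def lthornLL : ℕ → List PTree → List ℕ
  | _, [] => []
  | i, t :: ts => (lthornList t).map (· + i) ++ lthornLL (i + 1) ts
end

mutual
/-- The list of the values `rthorn(u)` for the internal nodes `u` of `T`, in
contour-walk (preorder) order. -/
def rthornList : PTree → List ℕ
  | .node [] => []
  | .node (t :: ts) => 0 :: rthornLL (t :: ts)
def rthornLL : List PTree → List ℕ
  | [] => []
  | t :: ts => (rthornList t).map (· + ts.length) ++ rthornLL ts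
end

/-! ## The bijections `λ` and `τ` -/

mutual
/-- `λ`: record each node of the tree at its first visit in the left-to-right contour
walk: `U_k` (i.e. `k`) for an internal node with `k+1` children, `D` (i.e. `-1`)
for a leaf. -/
def lambdaT : PTree → List ℤ
  | .node ts => ((ts.length : ℤ) - 1) :: lambdaL ts
def lambdaL : List PTree → List ℤ
  | [] => []
  | t :: ts => lambdaT t ++ lambdaL ts
end

/-- Auxiliary for `τ`: reading the path from right to left, maintain the stack of the
already-built subtrees (in left-to-right order); a down-step `D` creates a leaf and an
up-step `U_k` grabs the `k+1` topmost subtrees as its children.  This builds the same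
tree as the left-to-right "leftmost bud" construction. -/
def tauStack (P : List ℤ) : List PTree :=
  P.foldr (fun s st =>
    if s < 0 then PTree.node [] :: st
    else PTree.node (st.take (s.toNat + 1)) :: st.drop (s.toNat + 1)) []

/-- `τ`: the plane tree associated with a Łukasiewicz path. -/
def tau (P : List ℤ) : PTree := (tauStack P).headD (.node [])

mutual
/-- The mirror of a plane tree: reverse the left-to-right order of the children of
every internal node. -/
def mir : PTree → PTree
  | .node ts => .node (mirL ts).reverse
def mirL : List PTree → List PTree
  | [] => []
  | t :: ts => mir t :: mirL ts
end

mutual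
/-- The subtrees rooted at the internal nodes of `T`, in contour-walk (preorder)
order. -/
def internalSubtrees : PTree → List PTree
  | .node [] => []
  | .node (t :: ts) => .node (t :: ts) :: internalSubtreesL (t :: ts)
def internalSubtreesL : List PTree → List PTree
  | [] => []
  | t :: ts => internalSubtrees t ++ internalSubtreesL ts
end

/-- The multiset of degrees of the non-root internal nodes of `T`. -/
def nonRootInternalDegs (T : PTree) : Multiset ℕ :=
  (((internalSubtreesL (children T)).map numChildren : List ℕ) : Multiset ℕ)

/-! ## Lodestars and the lodestar swap -/

/-- A node is a lodestar-type node if it is internal and all its children are leaves. -/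
def isLodestarNode (t : PTree) : Bool :=
  !(children t).isEmpty && (children t).all (fun c => (children c).isEmpty)

mutual
/-- The subtree rooted at the *left lodestar* of `T`: the first internal node, in
contour-walk (preorder) order, all of whose children are leaves (if it exists). -/
def leftLode? : PTree → Option PTree
  | .node ts =>
    if isLodestarNode (.node ts) then some (.node ts) else leftLodeL? ts
def leftLodeL? : List PTree → Option PTree
  | [] => none
  | t :: ts =>
    match leftLode? t with
    | some r => some r
    | none => leftLodeL? ts
end

mutual
/-- The subtree rooted at the *right lodestar* of `T`: the last internal node, in
contour-walk (preorder) order, all of whose children are leaves (if it exists). -/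
def rightLode? : PTree → Option PTree
  | .node ts =>
    match rightLodeL? ts with
    | some r => some r
    | none => if isLodestarNode (.node ts) then some (.node ts) else none
def rightLodeL? : List PTree → Option PTree
  | [] => none
  | t :: ts =>
    match rightLodeL? ts with
    | some r => some r
    | none => rightLode? t
end

mutual
/-- Replace the left lodestar of `T` (first preorder all-leaf-children internal node)
by the tree `r`; `none` if `T` has no internal node. -/
def replF : PTree → PTree → Option PTree
  | r, .node ts =>
    if isLodestarNode (.node ts) then some r
    else (replFL r ts).map PTree.node
def replFL : PTree → List PTree → Option (List PTree)
  | _, [] => none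
  | r, t :: ts =>
    match replF r t with
    | some t' => some (t' :: ts)
    | none => (replFL r ts).map (t :: ·)
end

mutual
/-- Replace the right lodestar of `T` (last preorder all-leaf-children internal node)
by the tree `r`; `none` if `T` has no internal node. -/
def replL : PTree → PTree → Option PTree
  | r, .node ts =>
    match replLL r ts with
    | some ts' => some (.node ts')
    | none => if isLodestarNode (.node ts) then some r else none
def replLL : PTree → List PTree → Option (List PTree)
  | _, [] => none
  | r, t :: ts =>
    match replLL r ts with
    | some ts' => some (t :: ts')
    | none => (replL r t).map (· :: ts)
end

/-- The lodestar swap: exchange the subtrees rooted at the left lodestar and the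
right lodestar of `T` (each a node together with its pendant leaves). -/
def lodeSwap (T : PTree) : PTree :=
  match leftLode? T, rightLode? T with
  | some L, some R => ((replF R T).bind (replL L)).getD T
  | _, _ => T

end Luka


namespace LukaAux
open Luka

mutual
theorem lamT_sum : ∀ T : PTree, (lambdaT T).sum = -1
  | .node ts => by
      simp only [lambdaT, List.sum_cons, lamL_sum ts]
      ring
theorem lamL_sum : ∀ ts : List PTree, (lambdaL ts).sum = -(ts.length : ℤ)
  | [] => by simp [lambdaL]
  | t :: ts => by
      simp only [lambdaL, List.sum_append, lamT_sum t, lamL_sum ts, List.length_cons]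
      push_cast; ring
end

mutual
theorem lamT_steps : ∀ T : PTree, ∀ s ∈ lambdaT T, -1 ≤ s
  | .node ts => by
      intro s hs
      simp only [lambdaT, List.mem_cons] at hs
      rcases hs with rfl | hs
      · omega
      · exact lamL_steps ts s hs
theorem lamL_steps : ∀ ts : List PTree, ∀ s ∈ lambdaL ts, -1 ≤ s
  | [] => by simp [lambdaL]
  | t :: ts => by
      intro s hs
      simp only [lambdaL, List.mem_append] at hs
      rcases hs with hs | hs
      · exact lamT_steps t s hs
      · exact lamL_steps ts s hs
end

theorem lambdaL_append (A B : List PTree) : lambdaL (A ++ B) = lambdaL A ++ lambdaL B := by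
  induction A with
  | nil => simp [lambdaL]
  | cons a A ihA => rw [List.cons_append, lambdaL, lambdaL, ihA, List.append_assoc]

theorem lamL_ne_nil (ts : List PTree) (h : lambdaL ts ≠ []) : ts ≠ [] := by
  intro heq; exact h (by simp [heq, lambdaL])

mutual
theorem lamT_prefix : ∀ (T : PTree) (n : ℕ), n < (lambdaT T).length →
    0 ≤ ((lambdaT T).take n).sum
  | .node ts, n => by
      intro hn
      match n with
      | 0 => simp
      | n + 1 =>
        simp only [lambdaT, List.length_cons] at hn
        have hn' : n < (lambdaL ts).length := by omega
        have hne : ts ≠ [] := lamL_ne_nil ts (by intro h; rw [h] at hn'; simp at hn')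
        have := lamL_prefix ts n hne hn'
        simp only [lambdaT, List.take_succ_cons, List.sum_cons]
        have hlen : 1 ≤ ts.length := by
          cases ts with
          | nil => exact absurd rfl hne
          | cons a b => simp
        have : -(ts.length : ℤ) + 1 ≤ ((lambdaL ts).take n).sum := this
        have h1 : (1:ℤ) ≤ (ts.length : ℤ) := by exact_mod_cast hlen
        omega
theorem lamL_prefix : ∀ (ts : List PTree) (n : ℕ), ts ≠ [] → n < (lambdaL ts).length →
    -(ts.length : ℤ) + 1 ≤ ((lambdaL ts).take n).sum
  | [], n => by intro h; exact absurd rfl h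
  | t :: ts, n => by
      intro _ hn
      simp only [lambdaL, List.length_append] at hn
      rw [lambdaL, List.take_append, List.sum_append]
      set A := lambdaT t with hA
      rcases lt_trichotomy n A.length with h | h | h
      · have h0 : 0 ≤ (A.take n).sum := lamT_prefix t n h
        have : n - A.length = 0 := by omega
        rw [this]
        simp only [List.take_zero, List.sum_nil, List.length_cons]
        have : (0:ℤ) ≤ (ts.length : ℤ) := by positivity
        omega
      · have : n - A.length = 0 := by omega
        rw [this]
        have hAt : A.take n = A := List.take_of_length_le (le_of_eq h.symm)
        rw [hAt, hA, lamT_sum t]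
        simp only [List.take_zero, List.sum_nil, List.length_cons]
        have hts : ts ≠ [] := by
          intro heq
          rw [heq] at hn
          simp [lambdaL] at hn
          omega
        have hlen : 1 ≤ ts.length := by
          cases ts with
          | nil => exact absurd rfl hts
          | cons a b => simp
        have : (1:ℤ) ≤ (ts.length : ℤ) := by exact_mod_cast hlen
        push_cast
        omega
      · have hAt : A.take n = A := List.take_of_length_le (le_of_lt h)
        rw [hAt, hA, lamT_sum t]
        have hts : ts ≠ [] := by
          intro heq
          rw [heq] at hn
          simp [lambdaL] at hn
          omega
        have hn' : n - A.length < (lambdaL ts).length := by omega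
        have := lamL_prefix ts (n - A.length) hts hn'
        simp only [List.length_cons]
        simp only [hA] at this ⊢
        push_cast
        omega
end

theorem lamT_isLukas (T : PTree) : IsLukas (lambdaT T) := by
  obtain ⟨ts⟩ := T
  refine ⟨by simp [lambdaT], lamT_steps _, lamT_prefix _, lamT_sum _⟩

/-! ### tau ∘ lambda -/

/-- The step function used by `tauStack`. -/
def step (s : ℤ) (st : List PTree) : List PTree :=
  if s < 0 then PTree.node [] :: st
  else PTree.node (st.take (s.toNat + 1)) :: st.drop (s.toNat + 1)

theorem tauStack_eq (P : List ℤ) : tauStack P = P.foldr step [] := rfl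

mutual
theorem foldT : ∀ (T : PTree) (st : List PTree), (lambdaT T).foldr step st = T :: st
  | .node ts, st => by
      rw [lambdaT, List.foldr_cons, foldL ts st]
      cases ts with
      | nil =>
        simp [step]
      | cons a b =>
        have hpos : ¬ ((((a :: b).length : ℤ) - 1) < 0) := by
          simp only [List.length_cons]; push_cast; omega
        have htn : (((a :: b).length : ℤ) - 1).toNat + 1 = (a :: b).length := by
          simp only [List.length_cons]; omega
        rw [step, if_neg hpos, htn, List.take_left, List.drop_left]
theorem foldL : ∀ (ts st : List PTree), (lambdaL ts).foldr step st = ts ++ st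
  | [], st => by simp [lambdaL]
  | t :: ts, st => by
      rw [lambdaL, List.foldr_append, foldL ts st, foldT t (ts ++ st)]
      rfl
end

theorem tau_lambdaT (T : PTree) : tau (lambdaT T) = T := by
  rw [tau, tauStack_eq, foldT T []]
  rfl

/-! ### lambda ∘ tau -/

theorem tauStack_main : ∀ (P : List ℤ) (k : ℕ), P ≠ [] → (∀ s ∈ P, -1 ≤ s) →
    P.sum = -(k : ℤ) → (∀ n, n < P.length → -(k : ℤ) < (P.take n).sum) →
    (tauStack P).length = k ∧ lambdaL (tauStack P) = P := by
  intro P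
  induction P with
  | nil => intro k h; exact absurd rfl h
  | cons s rest ih =>
    intro k _ hsteps hsum hpre
    have hk1 : 1 ≤ k := by
      have := hpre 0 (by simp)
      simp at this
      omega
    have hstep : tauStack (s :: rest) = step s (tauStack rest) := rfl
    have hsrest : ∀ t ∈ rest, -1 ≤ t := fun t ht => hsteps t (List.mem_cons_of_mem _ ht)
    have hs1 : -1 ≤ s := hsteps s List.mem_cons_self
    rw [List.sum_cons] at hsum
    by_cases hneg : s < 0
    · have hs : s = -1 := by omega
      subst hs
      by_cases hrest : rest = []
      · subst hrest
        have : k = 1 := by simp at hsum; omega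
        subst this
        constructor
        · rfl
        · show lambdaL [PTree.node []] = [-1]
          simp [lambdaL, lambdaT]
      · have hk2 : 2 ≤ k := by
          by_contra hlt
          have hk : k = 1 := by omega
          subst hk
          have h1 : 1 < (List.cons (-1) rest).length := by
            simp only [List.length_cons]
            have : rest.length ≠ 0 := by simpa using hrest
            omega
          have := hpre 1 h1
          simp at this
        have hsum' : rest.sum = -((k - 1 : ℕ) : ℤ) := by push_cast; omega
        have hpre' : ∀ n, n < rest.length → -((k - 1 : ℕ) : ℤ) < (rest.take n).sum := by
          intro n hn
          have := hpre (n + 1) (by simp; omega)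
          simp only [List.take_succ_cons, List.sum_cons] at this
          push_cast
          push_cast at this
          omega
        obtain ⟨hlen, hlam⟩ := ih (k - 1) hrest hsrest hsum' hpre'
        rw [hstep]
        constructor
        · simp only [step, if_pos (by norm_num : (-1:ℤ) < 0), List.length_cons, hlen]
          omega
        · show lambdaL (PTree.node [] :: tauStack rest) = -1 :: rest
          rw [lambdaL, hlam, lambdaT]
          simp [lambdaL]
    · push_neg at hneg
      have hrest : rest ≠ [] := by
        intro heq
        rw [heq] at hsum
        simp at hsum
        omega
      set k' := k + s.toNat with hk'
      have hsum' : rest.sum = -((k' : ℕ) : ℤ) := by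
        have : (s.toNat : ℤ) = s := Int.toNat_of_nonneg hneg
        push_cast
        omega
      have hpre' : ∀ n, n < rest.length → -((k' : ℕ) : ℤ) < (rest.take n).sum := by
        intro n hn
        have := hpre (n + 1) (by simp; omega)
        simp only [List.take_succ_cons, List.sum_cons] at this
        have hts : (s.toNat : ℤ) = s := Int.toNat_of_nonneg hneg
        push_cast
        omega
      obtain ⟨hlen, hlam⟩ := ih k' hrest hsrest hsum' hpre'
      have hle : s.toNat + 1 ≤ (tauStack rest).length := by omega
      rw [hstep]
      have hstepeq : step s (tauStack rest)
          = PTree.node ((tauStack rest).take (s.toNat + 1))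
            :: (tauStack rest).drop (s.toNat + 1) := by
        rw [step, if_neg (by omega)]
      rw [hstepeq]
      constructor
      · simp only [List.length_cons, List.length_drop, hlen]
        omega
      · rw [lambdaL, lambdaT]
        have h1 : ((tauStack rest).take (s.toNat + 1)).length = s.toNat + 1 :=
          List.length_take_of_le hle
        have h2 : lambdaL ((tauStack rest).take (s.toNat + 1))
            ++ lambdaL ((tauStack rest).drop (s.toNat + 1)) = rest := by
          rw [← lambdaL_append, List.take_append_drop, hlam]
        rw [List.cons_append, h2, h1]
        congr 1
        have : (s.toNat : ℤ) = s := Int.toNat_of_nonneg hneg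
        push_cast
        omega

theorem lambdaT_tau (P : List ℤ) (hP : IsLukas P) : lambdaT (tau P) = P := by
  obtain ⟨hne, hsteps, hpre, hsum⟩ := hP
  have hsum' : P.sum = -((1 : ℕ) : ℤ) := by push_cast; omega
  have hpre' : ∀ n, n < P.length → -((1 : ℕ) : ℤ) < (P.take n).sum := by
    intro n hn
    have := hpre n hn
    push_cast
    omega
  obtain ⟨hlen, hlam⟩ := tauStack_main P 1 hne hsteps hsum' hpre'
  obtain ⟨T, hT⟩ : ∃ T, tauStack P = [T] := by
    match h : tauStack P, hlen with
    | [T], _ => exact ⟨T, rfl⟩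
  rw [hT] at hlam
  have : lambdaL [T] = lambdaT T := by simp [lambdaL]
  rw [this] at hlam
  rw [tau, hT]
  exact hlam

end LukaAux

open Luka in
/-- **Construction 3.1.**  The maps `λ` and `τ` are mutually inverse bijections between
the set of Łukasiewicz paths and the set of plane trees: `λ` sends any plane tree to a
Łukasiewicz path, `τ ∘ λ` is the identity on plane trees, and `λ ∘ τ` is the identity
on Łukasiewicz paths. -/
theorem lambda_tau_inverse_bijections :
    (∀ T : PTree, IsLukas (lambdaT T)) ∧
    (∀ T : PTree, tau (lambdaT T) = T) ∧
    (∀ P : List ℤ, IsLukas P → lambdaT (tau P) = P) :=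
  ⟨LukaAux.lamT_isLukas, LukaAux.tau_lambdaT, LukaAux.lambdaT_tau⟩
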